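/- Let lambda_ij > 0 for all pairs of leaves i != j of a level-one (star-shaped) tree T_r with root r and n >= 3 leaves, and suppose lambda satisfies the HSE condition: lambda_{i,l}/lambda_{j,l} = c_{ij} for all distinct triples i, j, l (c_{ij} independent of l). Then there exist positive numbers theta_1,...,theta_n such that lambda_{pq} = theta_p * theta_q for all p != q. -/

import Mathlib

/-- HSE on a star tree gives a product form: suppose `λ_{pq} > 0` for all
distinct leaves `p ≠ q` of a star tree with `n ≥ 3` leaves, `λ` is symmetric, and the HSE
condition holds: `λ_{il} / λ_{jl} = c_{ij}` for all pairwise-distinct `i, j, l` with `c_{ij}`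
not depending on `l`.  Then there are positive `θ_1, …, θ_n` with `λ_{pq} = θ_p θ_q` for all
`p ≠ q`. -/
theorem star_hse_product_form {n : ℕ} (hn : 3 ≤ n)
    (lam : Fin n → Fin n → ℝ)
    (hsymm : ∀ p q, lam p q = lam q p)
    (hpos : ∀ p q, p ≠ q → 0 < lam p q)
    (c : Fin n → Fin n → ℝ)
    (hhse : ∀ i j l, i ≠ j → i ≠ l → j ≠ l → lam i l / lam j l = c i j) :
    ∃ θ : Fin n → ℝ, (∀ i, 0 < θ i) ∧ ∀ p q, p ≠ q → lam p q = θ p * θ q := by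
  set i0 : Fin n := ⟨0, by omega⟩ with hi0
  set i1 : Fin n := ⟨1, by omega⟩ with hi1
  set i2 : Fin n := ⟨2, by omega⟩ with hi2
  have h01 : i0 ≠ i1 := by simp [hi0, hi1, Fin.ext_iff]
  have h02 : i0 ≠ i2 := by simp [hi0, hi2, Fin.ext_iff]
  have h12 : i1 ≠ i2 := by simp [hi1, hi2, Fin.ext_iff]
  -- cross-ratio consequence of HSE
  have cross : ∀ i j l l' : Fin n, i ≠ j → l ≠ i → l ≠ j → l' ≠ i → l' ≠ j →
      lam i l * lam j l' = lam i l' * lam j l := by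
    intro i j l l' hij hli hlj h'i h'j
    have h1 := hhse i j l hij (Ne.symm hli) (Ne.symm hlj)
    have h2 := hhse i j l' hij (Ne.symm h'i) (Ne.symm h'j)
    have heq : lam i l / lam j l = lam i l' / lam j l' := h1.trans h2.symm
    rw [div_eq_div_iff (hpos j l (Ne.symm hlj)).ne' (hpos j l' (Ne.symm h'j)).ne'] at heq
    exact heq
  have key : ∀ p q, p ≠ i0 → q ≠ i0 → p ≠ q →
      lam i0 p * lam i0 q * lam i1 i2 = lam p q * (lam i0 i1 * lam i0 i2) := by
    intro p q hp hq hpq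
    by_cases hp1 : p = i1
    · subst hp1
      by_cases hq2 : q = i2
      · subst hq2; ring
      · have h := cross i1 i0 q i2 h01.symm (Ne.symm hpq) hq (Ne.symm h12) (Ne.symm h02)
        linear_combination -lam i0 i1 * h
    · by_cases hp2 : p = i2
      · subst hp2
        by_cases hq1 : q = i1
        · subst hq1
          linear_combination lam i0 i1 * lam i0 i2 * hsymm i1 i2
        · have h := cross i2 i0 q i1 h02.symm (Ne.symm hpq) hq h12 (Ne.symm h01)
          linear_combination -lam i0 i2 * h - lam i0 i2 * lam i0 q * hsymm i2 i1
      · by_cases hq1 : q = i1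
        · subst hq1
          have h := cross i1 i0 p i2 h01.symm hp1 hp (Ne.symm h12) (Ne.symm h02)
          linear_combination -lam i0 i1 * h + lam i0 i1 * lam i0 i2 * hsymm i1 p
        · by_cases hq2 : q = i2
          · subst hq2
            have h := cross i2 i0 p i1 h02.symm hp2 hp h12 (Ne.symm h01)
            linear_combination -lam i0 i2 * h - lam i0 i2 * lam i0 p * hsymm i2 i1 + lam i0 i1 * lam i0 i2 * hsymm i2 p
          · have h1 := cross p i0 q i1 hp hpq.symm hq (Ne.symm hp1) (Ne.symm h01)
            have h2 := cross i1 i0 p i2 h01.symm hp1 hp (Ne.symm h12) (Ne.symm h02)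
            linear_combination -lam i0 i2 * h1 - lam i0 q * h2 - lam i0 i2 * lam i0 q * hsymm p i1
  have hratpos : 0 < lam i0 i1 * lam i0 i2 / lam i1 i2 := by
    have := hpos i0 i1 h01
    have := hpos i0 i2 h02
    have := hpos i1 i2 h12
    positivity
  set s : ℝ := Real.sqrt (lam i0 i1 * lam i0 i2 / lam i1 i2) with hs
  have hspos : 0 < s := Real.sqrt_pos.mpr hratpos
  have hs2 : s * s = lam i0 i1 * lam i0 i2 / lam i1 i2 := Real.mul_self_sqrt hratpos.le
  refine ⟨fun p => if p = i0 then s else lam i0 p / s, ?_, ?_⟩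
  · intro i
    by_cases hi : i = i0 <;> simp [hi, hspos]
    exact hpos i0 i (Ne.symm hi)
  · intro p q hpq
    by_cases hp : p = i0
    · subst hp
      have hq : q ≠ i0 := hpq.symm
      simp only [if_pos rfl, if_neg hq, ↓reduceIte]
      field_simp
    · by_cases hq : q = i0
      · subst hq
        simp only [if_pos rfl, if_neg hp, ↓reduceIte]
        rw [hsymm p i0]
        field_simp
      · simp only [if_neg hp, if_neg hq]
        have hk := key p q hp hq hpq
        have h12pos := hpos i1 i2 h12
        have h01pos := hpos i0 i1 h01
        have h02pos := hpos i0 i2 h02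
        rw [div_mul_div_comm, eq_div_iff (by positivity), hs2]
        field_simp
        linear_combination -hk
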